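/- Let h be a holomorphic function on an open subset U of ℂⁿ and let c ∈ U be a nondegenerate critical point of h (i.e. h'(c) = 0 and the complex Hessian of h at c is a nondegenerate complex bilinear form). Then c is a nondegenerate critical point of the real-valued function Re h : U → ℝ, and the Morse index of Re h at c equals n. -/

import Mathlib

open Module Complex ContinuousLinearMap

/-- Algebraic key lemma: a symmetric nondegenerate continuous ℂ-bilinear form on a
finite-dimensional complex space admits real subspaces of full complex dimension on which
`Re B(v,v)` is negative (resp. positive) definite. -/
lemma key_neg_pos {E : Type*} [NormedAddCommGroup E] [NormedSpace ℂ E]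
    [NormedSpace ℝ E] [IsScalarTower ℝ ℂ E] [FiniteDimensional ℂ E]
    (H : E →L[ℂ] E →L[ℂ] ℂ) (hsymm : ∀ v w, H v w = H w v)
    (hnd : ∀ v, (∀ w, H v w = 0) → v = 0) :
    ∃ W P : Submodule ℝ E, finrank ℝ W = finrank ℂ E ∧ finrank ℝ P = finrank ℂ E ∧
      (∀ v ∈ W, v ≠ 0 → (H v v).re < 0) ∧ (∀ v ∈ P, v ≠ 0 → 0 < (H v v).re) := by
  classical
  haveI : Invertible (2 : ℂ) := invertibleOfNonzero two_ne_zero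
  set m := finrank ℂ E with hm
  set B : LinearMap.BilinForm ℂ E :=
    LinearMap.mk₂ ℂ (fun v w => H v w) (by intros; simp) (by intros; simp)
      (by intros; simp) (by intros; simp) with hB
  have hBsymm : B.IsSymm := by
    refine ⟨fun x y => ?_⟩
    simpa [hB] using hsymm x y
  obtain ⟨b, hb⟩ := LinearMap.BilinForm.exists_orthogonal_basis (LinearMap.BilinForm.isSymm_iff.mp hBsymm)
  have horth : ∀ i j, i ≠ j → H (b i) (b j) = 0 := fun i j hij => hb hij
  set d : Fin m → ℂ := fun i => H (b i) (b i) with hd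
  -- expansion of the form on linear combinations of the basis
  have expand : ∀ cc : Fin m → ℂ,
      H (∑ i, cc i • b i) (∑ j, cc j • b j) = ∑ i, cc i ^ 2 * d i := by
    intro cc
    have inner : ∀ j, (H (∑ i, cc i • b i)) (b j) = cc j * d j := by
      intro j
      rw [map_sum, ContinuousLinearMap.sum_apply]
      simp only [ContinuousLinearMap.map_smul, ContinuousLinearMap.smul_apply]
      rw [Finset.sum_eq_single j]
      · rw [smul_eq_mul, hd]
      · intro i _ hij
        rw [horth i j hij, smul_zero]
      · simp
    rw [map_sum]
    simp only [ContinuousLinearMap.map_smul, smul_eq_mul]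
    refine Finset.sum_congr rfl fun j _ => ?_
    rw [inner j]
    ring
  have hdne : ∀ i, d i ≠ 0 := by
    intro i hdi
    have : b i = 0 := by
      apply hnd
      intro w
      have hw := b.sum_repr w
      calc H (b i) w = H (b i) (∑ j, b.repr w j • b j) := by rw [hw]
        _ = ∑ j, b.repr w j • H (b i) (b j) := by rw [map_sum]; simp
        _ = 0 := by
            rw [Finset.sum_eq_single i]
            · have h0 : H (b i) (b i) = 0 := hdi
              rw [h0, smul_zero]
            · intro j _ hji; rw [horth i j (Ne.symm hji)]; simp
            · simp
    exact b.ne_zero i this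
  -- choose square roots
  have hr : ∀ i, ∃ r : ℂ, r ^ 2 = -(d i)⁻¹ := fun i =>
    IsAlgClosed.exists_pow_nat_eq (-(d i)⁻¹) zero_lt_two
  have hs : ∀ i, ∃ s : ℂ, s ^ 2 = (d i)⁻¹ := fun i =>
    IsAlgClosed.exists_pow_nat_eq ((d i)⁻¹) zero_lt_two
  choose r hr2 using hr
  choose s hs2 using hs
  have hrne : ∀ i, r i ≠ 0 := by
    intro i hri
    apply hdne i
    have h := hr2 i
    rw [hri] at h
    have h2 : (d i)⁻¹ = 0 := by rw [← neg_eq_zero, ← h]; ring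
    exact inv_eq_zero.mp h2
  have hsne : ∀ i, s i ≠ 0 := by
    intro i hsi
    apply hdne i
    have h := hs2 i
    rw [hsi] at h
    have h2 : (d i)⁻¹ = 0 := by rw [← h]; ring
    exact inv_eq_zero.mp h2
  -- the general construction, for any scalar family ρ with ρ i ≠ 0
  have main : ∀ ρ : Fin m → ℂ, (∀ i, ρ i ≠ 0) →
      ∃ W : Submodule ℝ E, finrank ℝ W = m ∧
        ∀ v ∈ W, v ≠ 0 → ∃ t : Fin m → ℝ, (∃ i, t i ≠ 0) ∧
          H v v = ∑ i, ((t i : ℂ)) ^ 2 * (ρ i ^ 2 * d i) := by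
    intro ρ hρ
    set u : Fin m → E := fun i => ρ i • b i with hu
    have hlin : LinearIndependent ℝ u := by
      rw [Fintype.linearIndependent_iff]
      intro g hg i
      have : ∑ j, ((g j : ℂ) * ρ j) • b j = 0 := by
        rw [← hg]
        refine Finset.sum_congr rfl fun j _ => ?_
        rw [hu, mul_smul]
        norm_cast
        rw [← IsScalarTower.algebraMap_smul ℂ (g j) (ρ j • b j)]
        rfl
      have hz := Fintype.linearIndependent_iff.mp b.linearIndependent
        (fun j => (g j : ℂ) * ρ j) this i
      have : (g i : ℂ) = 0 := by
        rcases mul_eq_zero.mp hz with h | h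
        · exact h
        · exact absurd h (hρ i)
      exact_mod_cast this
    refine ⟨Submodule.span ℝ (Set.range u), ?_, ?_⟩
    · rw [finrank_span_eq_card hlin, Fintype.card_fin]
    · intro v hv hvne
      obtain ⟨t, ht⟩ := (Submodule.mem_span_range_iff_exists_fun ℝ).mp hv
      have hti : ∃ i, t i ≠ 0 := by
        by_contra hcon
        push_neg at hcon
        apply hvne
        rw [← ht]
        simp [hcon]
      refine ⟨t, hti, ?_⟩
      have hv' : v = ∑ i, ((t i : ℂ) * ρ i) • b i := by
        rw [← ht]
        refine Finset.sum_congr rfl fun j _ => ?_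
        rw [hu, mul_smul]
        rw [← IsScalarTower.algebraMap_smul ℂ (t j) (ρ j • b j)]
        rfl
      rw [hv', expand]
      refine Finset.sum_congr rfl fun i _ => ?_
      ring
  obtain ⟨W, hWrank, hWval⟩ := main r hrne
  obtain ⟨P, hPrank, hPval⟩ := main s hsne
  refine ⟨W, P, hWrank, hPrank, ?_, ?_⟩
  · intro v hvW hvne
    obtain ⟨t, ⟨i0, hi0⟩, hval⟩ := hWval v hvW hvne
    have hsum : H v v = -((∑ i, (t i) ^ 2 : ℝ) : ℂ) := by
      rw [hval]
      have : ∀ i, ((t i : ℂ)) ^ 2 * (r i ^ 2 * d i) = -((t i : ℂ) ^ 2) := by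
        intro i
        rw [hr2 i, neg_mul, inv_mul_cancel₀ (hdne i)]
        ring
      rw [Finset.sum_congr rfl fun i _ => this i]
      push_cast
      rw [← Finset.sum_neg_distrib]
    have hre : (H v v).re = -∑ i, (t i) ^ 2 := by rw [hsum, Complex.neg_re, Complex.ofReal_re]
    have hpos : 0 < ∑ i, (t i) ^ 2 :=
      Finset.sum_pos' (fun i _ => sq_nonneg _) ⟨i0, Finset.mem_univ _, by positivity⟩
    rw [hre]; linarith
  · intro v hvP hvne
    obtain ⟨t, ⟨i0, hi0⟩, hval⟩ := hPval v hvP hvne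
    have hsum : H v v = ((∑ i, (t i) ^ 2 : ℝ) : ℂ) := by
      rw [hval]
      have : ∀ i, ((t i : ℂ)) ^ 2 * (s i ^ 2 * d i) = (t i : ℂ) ^ 2 := by
        intro i
        rw [hs2 i, inv_mul_cancel₀ (hdne i), mul_one]
      rw [Finset.sum_congr rfl fun i _ => this i]
      push_cast
      rfl
    have hre : (H v v).re = ∑ i, (t i) ^ 2 := by rw [hsum, Complex.ofReal_re]
    have hpos : 0 < ∑ i, (t i) ^ 2 :=
      Finset.sum_pos' (fun i _ => sq_nonneg _) ⟨i0, Finset.mem_univ _, by positivity⟩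
    rw [hre]; linarith

set_option maxHeartbeats 1000000 in
/-- if `h` is holomorphic on an open `U ⊆ ℂⁿ` and `c ∈ U` is a
nondegenerate critical point of `h` (complex Hessian nondegenerate), then `c` is a
nondegenerate critical point of `Re h` (as a function of `2n` real variables) and the
Morse index of `Re h` at `c` equals `n`: there is an `n`-dimensional real subspace on
which the real Hessian is negative definite, and no larger such subspace. -/
theorem re_holomorphic_morse_index {n : ℕ} {U : Set (EuclideanSpace ℂ (Fin n))}
    (hU : IsOpen U) {h : EuclideanSpace ℂ (Fin n) → ℂ} (hh : DifferentiableOn ℂ h U)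
    {c : EuclideanSpace ℂ (Fin n)} (hc : c ∈ U)
    (hcrit : fderiv ℂ h c = 0)
    (hnd : ∀ v, (∀ w, fderiv ℂ (fderiv ℂ h) c v w = 0) → v = 0) :
    (fderiv ℝ (fun z => (h z).re) c = 0) ∧
    (∀ v, (∀ w, fderiv ℝ (fderiv ℝ (fun z => (h z).re)) c v w = 0) → v = 0) ∧
    (∃ W : Submodule ℝ (EuclideanSpace ℂ (Fin n)),
      Module.finrank ℝ W = n ∧
      (∀ v ∈ W, v ≠ 0 → fderiv ℝ (fderiv ℝ (fun z => (h z).re)) c v v < 0) ∧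
      (∀ W' : Submodule ℝ (EuclideanSpace ℂ (Fin n)),
        (∀ v ∈ W', v ≠ 0 → fderiv ℝ (fderiv ℝ (fun z => (h z).re)) c v v < 0) →
        Module.finrank ℝ W' ≤ n)) := by
  classical
  set f : EuclideanSpace ℂ (Fin n) → ℝ := fun z => (h z).re with hf
  have hrankC : Module.finrank ℂ (EuclideanSpace ℂ (Fin n)) = n := finrank_euclideanSpace_fin
  have hrankR : Module.finrank ℝ (EuclideanSpace ℂ (Fin n)) = 2 * n := by
    rw [← Module.finrank_mul_finrank ℝ ℂ (EuclideanSpace ℂ (Fin n)), Complex.finrank_real_complex, hrankC]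
  by_cases H2 : DifferentiableAt ℂ (fderiv ℂ h) c
  case neg =>
    -- degenerate junk case: the whole space is trivial
    have hH0 : fderiv ℂ (fderiv ℂ h) c = 0 := fderiv_zero_of_not_differentiableAt H2
    have hall : ∀ v : (EuclideanSpace ℂ (Fin n)), v = 0 := fun v => hnd v (by rw [hH0]; intro w; rfl)
    haveI : Subsingleton (EuclideanSpace ℂ (Fin n)) := subsingleton_of_forall_eq 0 hall
    have hn0 : n = 0 := by
      have := Module.finrank_zero_of_subsingleton (R := ℝ) (M := (EuclideanSpace ℂ (Fin n)))
      omega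
    refine ⟨?_, fun v _ => hall v, ⟨⊥, ?_, ?_, ?_⟩⟩
    · ext v
      rw [hall v]
      simp
    · rw [finrank_bot, hn0]
    · intro v _ hv0
      exact absurd (hall v) hv0
    · intro W' _
      have h1 := Submodule.finrank_le W'
      omega
  case pos =>
  have hev : ∀ᶠ z in nhds c, DifferentiableAt ℂ h z := by
    filter_upwards [hU.mem_nhds hc] with z hz
    exact hh.differentiableAt (hU.mem_nhds hz)
  have hfz : ∀ z : (EuclideanSpace ℂ (Fin n)), DifferentiableAt ℂ h z →
      fderiv ℝ f z = Complex.reCLM.comp ((fderiv ℂ h z).restrictScalars ℝ) := by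
    intro z hz
    exact (Complex.reCLM.hasFDerivAt.comp z
      ((hz.hasFDerivAt).restrictScalars ℝ)).fderiv
  -- the continuous linear "post-processing" map
  set Φ : ((EuclideanSpace ℂ (Fin n)) →L[ℂ] ℂ) →L[ℝ] ((EuclideanSpace ℂ (Fin n)) →L[ℝ] ℝ) :=
    (ContinuousLinearMap.compL ℝ (EuclideanSpace ℂ (Fin n)) ℂ ℝ Complex.reCLM).comp
      (ContinuousLinearMap.restrictScalarsL ℂ (EuclideanSpace ℂ (Fin n)) ℂ ℝ ℝ) with hΦ
  have hΦap : ∀ (L : (EuclideanSpace ℂ (Fin n)) →L[ℂ] ℂ) (w : (EuclideanSpace ℂ (Fin n))), Φ L w = (L w).re := by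
    intro L w
    rfl
  set H : (EuclideanSpace ℂ (Fin n)) →L[ℂ] (EuclideanSpace ℂ (Fin n)) →L[ℂ] ℂ := fderiv ℂ (fderiv ℂ h) c with hH
  have heq : (fun z => fderiv ℝ f z) =ᶠ[nhds c] (fun z => Φ (fderiv ℂ h z)) := by
    filter_upwards [hev] with z hz
    rw [hfz z hz]
    ext w
    rw [hΦap]
    rfl
  have hgd : HasFDerivAt (fun z => Φ (fderiv ℂ h z)) (Φ.comp (H.restrictScalars ℝ)) c :=
    Φ.hasFDerivAt.comp c (H2.hasFDerivAt.restrictScalars ℝ)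
  have hsnd : fderiv ℝ (fderiv ℝ f) c = Φ.comp (H.restrictScalars ℝ) := by
    rw [heq.fderiv_eq]
    exact hgd.fderiv
  have K : ∀ v w : (EuclideanSpace ℂ (Fin n)), fderiv ℝ (fderiv ℝ f) c v w = (H v w).re := by
    intro v w
    rw [hsnd]
    rfl
  -- symmetry of the complex Hessian
  have hsymm : ∀ v w : (EuclideanSpace ℂ (Fin n)), H v w = H w v := by
    intro v w
    refine second_derivative_symmetric_of_eventually (f := h) (f' := fderiv ℂ h) ?_
      H2.hasFDerivAt v w
    filter_upwards [hev] with z hz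
    exact hz.hasFDerivAt
  refine ⟨?_, ?_, ?_⟩
  · rw [hfz c (hh.differentiableAt (hU.mem_nhds hc)), hcrit]
    ext w
    simp
  · intro v hv
    apply hnd
    intro w
    have h1 := hv w
    have h2 := hv (Complex.I • w)
    rw [K] at h1 h2
    have hIw : H v (Complex.I • w) = Complex.I * H v w := by
      rw [ContinuousLinearMap.map_smul, smul_eq_mul]
    rw [hIw, Complex.mul_re, Complex.I_re, Complex.I_im] at h2
    refine Complex.ext (by simpa using h1) ?_
    simp only [Complex.zero_im]
    linarith
  · obtain ⟨W, P, hWrank, hPrank, hWneg, hPpos⟩ := key_neg_pos H hsymm hnd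
    refine ⟨W, ?_, ?_, ?_⟩
    · rw [hWrank, hrankC]
    · intro v hvW hv0
      rw [K v v]
      exact hWneg v hvW hv0
    · intro W' hW'
      have hdisj : W' ⊓ P = ⊥ := by
        rw [Submodule.eq_bot_iff]
        intro x hx
        by_contra hx0
        have h1 := hW' x (Submodule.mem_inf.mp hx).1 hx0
        have h2 := hPpos x (Submodule.mem_inf.mp hx).2 hx0
        rw [K x x] at h1
        linarith
      have hsum := Submodule.finrank_sup_add_finrank_inf_eq W' P
      rw [hdisj, finrank_bot] at hsum
      have hle : Module.finrank ℝ ↥(W' ⊔ P) ≤ Module.finrank ℝ (EuclideanSpace ℂ (Fin n)) := Submodule.finrank_le _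
      rw [hrankR] at hle
      rw [hPrank, hrankC] at hsum
      omega
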